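/- Let G be a cluster graph, let F be a set of non-edges of G such that G+F is a cluster graph, and let k be a non-negative integer with |F| ≤ k. Let 𝓗 be the set of connected components of G that are modified by F. Then the total number of vertices in the components of 𝓗, i.e., Σ_{H ∈ 𝓗} |V(H)|, is at most 2k. -/

import Mathlib

open SimpleGraph

/-- A graph is a cluster graph if every connected component is a clique
(equivalently, it has no induced `P₃`). -/
def IsClusterGraph {V : Type*} (G : SimpleGraph V) : Prop :=
  ∀ ⦃u v w : V⦄, G.Adj u v → G.Adj v w → u ≠ w → G.Adj u w

/-- `G + F`: the graph obtained from `G` by adding the pairs in `F` as edges. -/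
def addEdges {V : Type*} (G : SimpleGraph V) (F : Set (Sym2 V)) : SimpleGraph V :=
  G ⊔ SimpleGraph.fromEdgeSet F

/-- `F` modifies the vertex `v` if some pair of `F` contains `v`. -/
def ModifiesVertex {V : Type*} (F : Set (Sym2 V)) (v : V) : Prop :=
  ∃ e ∈ F, v ∈ e

/-- `F` modifies the connected component `c` if it modifies some vertex of `c`. -/
def ModifiesComponent {V : Type*} {G : SimpleGraph V} (F : Set (Sym2 V))
    (c : G.ConnectedComponent) : Prop :=
  ∃ v ∈ c.supp, ModifiesVertex F v

/-- In a cluster graph, reachable vertices are equal or adjacent. -/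
lemma cluster_reachable {V : Type*} {G : SimpleGraph V} (hG : IsClusterGraph G)
    {u v : V} (h : G.Reachable u v) : u = v ∨ G.Adj u v := by
  obtain ⟨w⟩ := h
  induction w with
  | nil => exact Or.inl rfl
  | cons h p ih =>
    rename_i a b c
    rcases ih with rfl | hbc
    · exact Or.inr h
    · by_cases hac : a = c
      · exact Or.inl hac
      · exact Or.inr (hG h hbc hac)

theorem sum_modified_components_card_le {V : Type*} [Fintype V]
    (G : SimpleGraph V) (F : Set (Sym2 V)) (k : ℕ)
    (hG : IsClusterGraph G)
    (hF : ∀ e ∈ F, ¬ e.IsDiag ∧ e ∉ G.edgeSet)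
    (hGF : IsClusterGraph (addEdges G F))
    (hcard : F.ncard ≤ k) :
    ∑ᶠ c ∈ {c : G.ConnectedComponent | ModifiesComponent F c}, c.supp.ncard ≤ 2 * k := by
  classical
  -- key: every vertex of a modified component is itself modified
  have key : ∀ c : G.ConnectedComponent, ModifiesComponent F c →
      ∀ u ∈ c.supp, ModifiesVertex F u := by
    rintro c ⟨v, hv, e, heF, hve⟩ u hu
    obtain ⟨w, rfl⟩ := Sym2.mem_iff_exists.mp hve
    have hvw : v ≠ w := fun h => (hF _ heF).1 (by simp [← h])
    have hnadj : ¬ G.Adj v w := fun h => (hF _ heF).2 h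
    -- u and v are in the same component
    have hreach : G.Reachable u v := by
      rw [ConnectedComponent.mem_supp_iff] at hu hv
      exact (ConnectedComponent.exact (hu.trans hv.symm))
    rcases cluster_reachable hG hreach with rfl | hadj
    · exact ⟨_, heF, hve⟩
    · -- u ≠ w since w not adjacent/equal to v in G while u is adjacent
      have huw : u ≠ w := by
        rintro rfl
        exact hnadj hadj.symm
      have h1 : (addEdges G F).Adj u v := Or.inl hadj
      have h2 : (addEdges G F).Adj v w := Or.inr ⟨heF, hvw⟩
      have h3 : (addEdges G F).Adj u w := hGF h1 h2 huw
      rcases h3 with h3 | h3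
      · -- then w would be in the component, contradicting hnadj
        exfalso
        rcases cluster_reachable hG (hreach.symm.trans h3.reachable) with rfl | hvw'
        · exact hvw rfl
        · exact hnadj hvw'
      · exact ⟨_, h3.1, Sym2.mem_mk_left u w⟩
  set M : Set V := {v | ModifiesVertex F v} with hM
  set S : Set G.ConnectedComponent := {c | ModifiesComponent F c} with hS
  -- rewrite the finsum as a finset sum
  rw [← Set.coe_toFinset S, finsum_mem_coe_finset]
  have hdisj : (S.toFinset : Set G.ConnectedComponent).Pairwise
      fun c d => Disjoint (c.supp.toFinset) (d.supp.toFinset) := by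
    intro c _ d _ hcd
    rw [Finset.disjoint_left]
    intro a ha hb
    rw [Set.mem_toFinset, ConnectedComponent.mem_supp_iff] at ha hb
    exact hcd (ha ▸ hb ▸ rfl)
  calc ∑ c ∈ S.toFinset, c.supp.ncard
      = ∑ c ∈ S.toFinset, c.supp.toFinset.card := by
        simp [Set.ncard_eq_toFinset_card']
    _ = (S.toFinset.biUnion fun c => c.supp.toFinset).card :=
        (Finset.card_biUnion hdisj).symm
    _ ≤ M.toFinset.card := by
        apply Finset.card_le_card
        intro v hv
        rw [Finset.mem_biUnion] at hv
        obtain ⟨c, hc, hvc⟩ := hv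
        rw [Set.mem_toFinset] at hc hvc ⊢
        exact key c hc v hvc
    _ ≤ 2 * k := by
        have hFfin : F.Finite := Set.toFinite F
        have : M.toFinset ⊆ F.toFinset.biUnion fun e =>
            Sym2.lift ⟨fun a b => ({a, b} : Finset V), fun a b => by
              simp [Finset.pair_comm]⟩ e := by
          intro v hv
          rw [Set.mem_toFinset] at hv
          obtain ⟨e, heF, hve⟩ := hv
          rw [Finset.mem_biUnion]
          refine ⟨e, Set.mem_toFinset.mpr heF, ?_⟩
          induction e with
          | h a b => simpa [Sym2.mem_iff] using hve
        calc M.toFinset.card ≤ _ := Finset.card_le_card this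
          _ ≤ ∑ e ∈ F.toFinset, (Sym2.lift ⟨fun a b => ({a, b} : Finset V), fun a b => by
              simp [Finset.pair_comm]⟩ e).card := Finset.card_biUnion_le
          _ ≤ ∑ _e ∈ F.toFinset, 2 := by
              apply Finset.sum_le_sum
              intro e _
              induction e with
              | h a b => exact (Finset.card_insert_le _ _).trans (by simp)
          _ = 2 * F.toFinset.card := by rw [Finset.sum_const, smul_eq_mul, mul_comm]
          _ ≤ 2 * k := by
              rw [← Set.ncard_eq_toFinset_card']
              omega
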